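/- Assume the V structure. Let c ∈ {0,1} with P(C=c) > 0. Then cov(X, Y | C=c) = [ P(X=1)·P(X=0)·P(Y=1)·P(Y=0) · ( p_{c|00}·p_{c|11} − p_{c|10}·p_{c|01} ) ] / P(C=c)^2. -/

import Mathlib

open MeasureTheory ProbabilityTheory

variable {Ω : Type*} [MeasurableSpace Ω]

/-- The event that the random variable `X` takes the value `x`. -/
def ev (X : Ω → ℝ) (x : ℝ) : Set Ω := {ω | X ω = x}

/-- The probability of an event, as a real number. -/
noncomputable def pr (P : Measure Ω) (s : Set Ω) : ℝ := (P s).toReal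

/-- The conditional probability `P(s | t)`, as a real number. -/
noncomputable def cpr (P : Measure Ω) (s t : Set Ω) : ℝ := pr (P[|t]) s

/-- The covariance of two real-valued random variables. -/
noncomputable def rcov (P : Measure Ω) (X Y : Ω → ℝ) : ℝ :=
  ∫ ω, (X ω - ∫ ω', X ω' ∂P) * (Y ω - ∫ ω', Y ω' ∂P) ∂P

/-- The conditional covariance of two real-valued random variables given an event. -/
noncomputable def covCond (P : Measure Ω) (X Y : Ω → ℝ) (t : Set Ω) : ℝ :=
  rcov (P[|t]) X Y

/-- The conditional variance of a real-valued random variable given an event. -/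
noncomputable def varCond (P : Measure Ω) (X : Ω → ℝ) (t : Set Ω) : ℝ :=
  covCond P X X t

/-- A measurable `{0,1}`-valued random variable. -/
def IsBin (X : Ω → ℝ) : Prop := Measurable X ∧ ∀ ω, X ω = 0 ∨ X ω = 1

/- ========= auxiliary lemmas ========= -/

lemma ev_meas {X : Ω → ℝ} (hX : IsBin X) (x : ℝ) : MeasurableSet (ev X x) :=
  hX.1 (measurableSet_singleton x)

lemma bin_indicator {X : Ω → ℝ} (hX : IsBin X) :
    X = (ev X 1).indicator (fun _ => (1:ℝ)) := by
  funext ω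
  rcases hX.2 ω with h | h <;> simp [ev, Set.indicator, h]

lemma bin_mul_indicator {X Y : Ω → ℝ} (hX : IsBin X) (hY : IsBin Y) :
    (fun ω => X ω * Y ω) = (ev X 1 ∩ ev Y 1).indicator (fun _ => (1:ℝ)) := by
  funext ω
  rcases hX.2 ω with h | h <;> rcases hY.2 ω with h' | h' <;>
    simp [ev, Set.indicator, h, h']

lemma bin_integral {X : Ω → ℝ} (hX : IsBin X) (μ : Measure Ω) :
    ∫ ω, X ω ∂μ = pr μ (ev X 1) := by
  rw [show (fun ω => X ω) = (ev X 1).indicator (fun _ => (1:ℝ)) from bin_indicator hX]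
  rw [integral_indicator_const _ (ev_meas hX 1)]
  simp [pr]
  rfl

lemma bin_mul_integral {X Y : Ω → ℝ} (hX : IsBin X) (hY : IsBin Y) (μ : Measure Ω) :
    ∫ ω, X ω * Y ω ∂μ = pr μ (ev X 1 ∩ ev Y 1) := by
  rw [show (fun ω => X ω * Y ω) = (ev X 1 ∩ ev Y 1).indicator (fun _ => (1:ℝ)) from
    bin_mul_indicator hX hY]
  rw [integral_indicator_const _ ((ev_meas hX 1).inter (ev_meas hY 1))]
  simp [pr]
  rfl

lemma bin_integrable {X : Ω → ℝ} (hX : IsBin X) (μ : Measure Ω) [IsFiniteMeasure μ] :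
    Integrable X μ := by
  rw [bin_indicator hX]
  exact (integrable_const (1:ℝ)).indicator (ev_meas hX 1)

lemma bin_mul_integrable {X Y : Ω → ℝ} (hX : IsBin X) (hY : IsBin Y) (μ : Measure Ω)
    [IsFiniteMeasure μ] : Integrable (fun ω => X ω * Y ω) μ := by
  rw [bin_mul_indicator hX hY]
  exact (integrable_const (1:ℝ)).indicator ((ev_meas hX 1).inter (ev_meas hY 1))

lemma rcov_bin (μ : Measure Ω) [IsProbabilityMeasure μ] {X Y : Ω → ℝ}
    (hX : IsBin X) (hY : IsBin Y) :
    rcov μ X Y = pr μ (ev X 1 ∩ ev Y 1) - pr μ (ev X 1) * pr μ (ev Y 1) := by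
  set p := ∫ ω', X ω' ∂μ with hp
  set q := ∫ ω', Y ω' ∂μ with hq
  have hfun : ∀ ω, (X ω - p) * (Y ω - q)
      = X ω * Y ω - p * Y ω - q * X ω + p * q := by intro ω; ring
  have hXi := bin_integrable hX μ
  have hYi := bin_integrable hY μ
  have hXYi := bin_mul_integrable hX hY μ
  have this1 : rcov μ X Y = ∫ ω, (X ω * Y ω - p * Y ω - q * X ω + p * q) ∂μ := by
    unfold rcov
    exact integral_congr_ae (Filter.Eventually.of_forall hfun)
  have i2 : Integrable (fun ω => X ω * Y ω - p * Y ω) μ := hXYi.sub (hYi.const_mul p)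
  have i3 : Integrable (fun ω => X ω * Y ω - p * Y ω - q * X ω) μ := i2.sub (hXi.const_mul q)
  rw [this1, integral_add i3 (integrable_const _),
    integral_sub i2 (hXi.const_mul q),
    integral_sub hXYi (hYi.const_mul p),
    integral_const_mul, integral_const_mul, integral_const]
  rw [bin_mul_integral hX hY, bin_integral hX, bin_integral hY]
  rw [hp, hq, bin_integral hX, bin_integral hY]
  simp
  ring

lemma pr_cond (P : Measure Ω) {t : Set Ω} (ht : MeasurableSet t) (s : Set Ω) :
    pr (P[|t]) s = pr P (t ∩ s) / pr P t := by
  unfold pr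
  rw [cond_apply ht, ENNReal.toReal_mul, ENNReal.toReal_inv, div_eq_inv_mul]

lemma pr_split (P : Measure Ω) [IsFiniteMeasure P] (A : Set Ω) {X : Ω → ℝ}
    (hX : IsBin X) :
    pr P A = pr P (A ∩ ev X 1) + pr P (A ∩ ev X 0) := by
  have hc : A ∩ ev X 0 = A \ ev X 1 := by
    ext ω; rcases hX.2 ω with h | h <;> simp [ev, h, Set.mem_diff]
  rw [hc]
  unfold pr
  rw [← ENNReal.toReal_add (measure_ne_top _ _) (measure_ne_top _ _),
    measure_inter_add_diff A (ev_meas hX 1)]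

lemma pr_indep {X Y : Ω → ℝ} (P : Measure Ω) (hindep : IndepFun X Y P)
    (x y : ℝ) : pr P (ev X x ∩ ev Y y) = pr P (ev X x) * pr P (ev Y y) := by
  have h := hindep.measure_inter_preimage_eq_mul {x} {y}
    (measurableSet_singleton x) (measurableSet_singleton y)
  unfold pr
  have hx : ev X x = X ⁻¹' {x} := rfl
  have hy : ev Y y = Y ⁻¹' {y} := rfl
  rw [hx, hy, h, ENNReal.toReal_mul]

lemma pr_compl (P : Measure Ω) [IsProbabilityMeasure P] {X : Ω → ℝ}
    (hX : IsBin X) : pr P (ev X 0) = 1 - pr P (ev X 1) := by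
  have h := pr_split P Set.univ hX
  simp only [Set.univ_inter] at h
  have hu : pr P Set.univ = 1 := by simp [pr]
  rw [hu] at h
  linarith

set_option maxHeartbeats 1000000 in
/-- V-bias on the covariance scale, conditioning on `C = c`. -/
theorem V_bias_cov (P : Measure Ω) [IsProbabilityMeasure P]
    (X Y C : Ω → ℝ) (hX : IsBin X) (hY : IsBin Y) (hC : IsBin C)
    (hindep : IndepFun X Y P)
    (hX1 : 0 < pr P (ev X 1)) (hX1' : pr P (ev X 1) < 1)
    (hY1 : 0 < pr P (ev Y 1)) (hY1' : pr P (ev Y 1) < 1)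
    (c : ℝ) (hc : c = 0 ∨ c = 1) (hCc : 0 < pr P (ev C c)) :
    covCond P X Y (ev C c) =
      pr P (ev X 1) * pr P (ev X 0) * pr P (ev Y 1) * pr P (ev Y 0) *
        (cpr P (ev C c) (ev X 0 ∩ ev Y 0) * cpr P (ev C c) (ev X 1 ∩ ev Y 1) -
          cpr P (ev C c) (ev X 1 ∩ ev Y 0) * cpr P (ev C c) (ev X 0 ∩ ev Y 1)) /
        (pr P (ev C c)) ^ 2 := by
  have ht : MeasurableSet (ev C c) := ev_meas hC c
  have hPt0 : P (ev C c) ≠ 0 := by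
    intro h
    rw [pr, h] at hCc
    simp at hCc
  haveI : IsProbabilityMeasure (P[|ev C c]) := cond_isProbabilityMeasure hPt0
  -- notation
  set t := ev C c with ht_def
  set a1 := pr P (ev X 1) with ha1_def
  set b1 := pr P (ev Y 1) with hb1_def
  set a0 := pr P (ev X 0) with ha0_def
  set b0 := pr P (ev Y 0) with hb0_def
  set Z := pr P t with hZ_def
  set m11 := pr P (t ∩ (ev X 1 ∩ ev Y 1)) with hm11_def
  set m10 := pr P (t ∩ (ev X 1 ∩ ev Y 0)) with hm10_def
  set m01 := pr P (t ∩ (ev X 0 ∩ ev Y 1)) with hm01_def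
  set m00 := pr P (t ∩ (ev X 0 ∩ ev Y 0)) with hm00_def
  -- basic positivity facts
  have ha0 : a0 = 1 - a1 := pr_compl P hX
  have hb0 : b0 = 1 - b1 := pr_compl P hY
  have ha1ne : a1 ≠ 0 := ne_of_gt hX1
  have ha0ne : a0 ≠ 0 := by rw [ha0]; linarith
  have hb1ne : b1 ≠ 0 := ne_of_gt hY1
  have hb0ne : b0 ≠ 0 := by rw [hb0]; linarith
  have hZne : Z ≠ 0 := ne_of_gt hCc
  -- left-hand side
  have hcov : covCond P X Y t
      = m11 / Z - ((pr P (t ∩ ev X 1)) / Z) * ((pr P (t ∩ ev Y 1)) / Z) := by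
    show rcov (P[|t]) X Y = _
    rw [rcov_bin (P[|t]) hX hY, pr_cond P ht, pr_cond P ht, pr_cond P ht]
  have hsplitX : pr P (t ∩ ev X 1) = m11 + m10 := by
    rw [pr_split P (t ∩ ev X 1) hY, Set.inter_assoc, Set.inter_assoc]
  have hsplitY : pr P (t ∩ ev Y 1) = m11 + m01 := by
    rw [pr_split P (t ∩ ev Y 1) hX]
    congr 1 <;> · congr 1; ext ω; simp [Set.mem_inter_iff]; tauto
  have hZsum : Z = (m11 + m10) + (m01 + m00) := by
    rw [hZ_def, pr_split P t hX, pr_split P (t ∩ ev X 1) hY,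
      pr_split P (t ∩ ev X 0) hY, Set.inter_assoc, Set.inter_assoc,
      Set.inter_assoc, Set.inter_assoc]
  -- the conditional probabilities
  have hq : ∀ x y : ℝ, cpr P t (ev X x ∩ ev Y y)
      = pr P (t ∩ (ev X x ∩ ev Y y)) / (pr P (ev X x) * pr P (ev Y y)) := by
    intro x y
    unfold cpr
    rw [pr_cond P ((ev_meas hX x).inter (ev_meas hY y)), Set.inter_comm,
      pr_indep P hindep]
  have hq00 : cpr P t (ev X 0 ∩ ev Y 0) = m00 / (a0 * b0) := hq 0 0
  have hq11 : cpr P t (ev X 1 ∩ ev Y 1) = m11 / (a1 * b1) := hq 1 1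
  have hq10 : cpr P t (ev X 1 ∩ ev Y 0) = m10 / (a1 * b0) := hq 1 0
  have hq01 : cpr P t (ev X 0 ∩ ev Y 1) = m01 / (a0 * b1) := hq 0 1
  rw [hcov, hsplitX, hsplitY, hq00, hq11, hq10, hq01]
  have hrhs : a1 * a0 * b1 * b0 *
      (m00 / (a0 * b0) * (m11 / (a1 * b1)) - m10 / (a1 * b0) * (m01 / (a0 * b1)))
      = m00 * m11 - m10 * m01 := by
    field_simp
  have key : m11 * Z - (m11 + m10) * (m11 + m01) = m00 * m11 - m10 * m01 := by
    rw [hZsum]; ring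
  rw [hrhs, ← key]
  field_simp
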